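/- Suppose |ξ(x,t)| ≤ max{0, 1 − c·dist²(x, ∂𝒜(t))} for a constant c > 0. Then for every x and t, c·min{dist²(x, ∂𝒜(t)), 1/c} ≤ 1 − |ξ(x,t)| ≤ 2(1 − n·ξ(x,t)) for any unit vector n; hence ∫ σ min{dist²(·,∂𝒜(t)), 1} d|∇χ_{A(t)}| ≤ C E_rel[u_A|u_𝒜](t) for a constant C depending on c. -/

import Mathlib

open MeasureTheory

lemma min_aux (c a : ℝ) (hc : 0 < c) (ha : 0 ≤ a) : min a 1 ≤ max 1 c * min a (1/c) := by
  rcases le_total a (1/c) with h | h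
  · rw [min_eq_left h]
    have h1 : (1:ℝ) ≤ max 1 c := le_max_left _ _
    have h2 : min a 1 ≤ a := min_le_left _ _
    nlinarith
  · rw [min_eq_right h]
    rcases le_total c 1 with h2 | h2
    · rw [max_eq_left h2]
      have : (1:ℝ) ≤ 1/c := by
        rw [le_div_iff₀ hc]; linarith
      have := min_le_right a 1
      linarith
    · rw [max_eq_right h2, mul_one_div, div_self hc.ne']
      exact min_le_right a 1

/-- Coercivity of the relative energy with respect to the squared distance to the
interface: if `‖ξ(x,t)‖ ≤ max{0, 1 − c dist²(x, ∂𝒜(t))}`, then pointwise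
`c min{dist², 1/c} ≤ 1 − ‖ξ‖ ≤ 2(1 − n·ξ)` for any unit vector `n`, and
`∫ σ min{dist²(·,∂𝒜(t)), 1} d|∇χ_{A(t)}| ≤ C E_rel[u_A|u_𝒜](t)`. -/
theorem stmt_15 {N : ℕ} (c : ℝ) (hc : 0 < c)
    (Γ : ℝ → Set (EuclideanSpace ℝ (Fin N))) (hΓ : ∀ t, (Γ t).Nonempty)
    (ξ : EuclideanSpace ℝ (Fin N) → ℝ → EuclideanSpace ℝ (Fin N))
    (hξ : ∀ x t, ‖ξ x t‖ ≤ max 0 (1 - c * (Metric.infDist x (Γ t)) ^ 2))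
    (hξm : ∀ t, Measurable (fun x => ξ x t))
    (σ : EuclideanSpace ℝ (Fin N) → ℝ) (δ Cδ : ℝ) (hδ : 0 < δ)
    (hσ : Continuous σ) (hσb : ∀ x, δ ≤ σ x ∧ σ x ≤ Cδ)
    (P : ℝ → Measure (EuclideanSpace ℝ (Fin N))) (hP : ∀ t, IsFiniteMeasure (P t))
    (nA : ℝ → EuclideanSpace ℝ (Fin N) → EuclideanSpace ℝ (Fin N))
    (hnAm : ∀ t, Measurable (nA t)) (hnA1 : ∀ t, ∀ᵐ x ∂(P t), ‖nA t x‖ = 1) :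
    (∀ x t, ∀ n : EuclideanSpace ℝ (Fin N), ‖n‖ = 1 →
        c * min ((Metric.infDist x (Γ t)) ^ 2) (1 / c) ≤ 1 - ‖ξ x t‖ ∧
          1 - ‖ξ x t‖ ≤ 2 * (1 - (inner ℝ n (ξ x t) : ℝ))) ∧
      ∃ C > 0, ∀ t,
        (∫ x, σ x * min ((Metric.infDist x (Γ t)) ^ 2) 1 ∂(P t)) ≤
          C * ∫ x, σ x * (1 - (inner ℝ (nA t x) (ξ x t) : ℝ)) ∂(P t) := by
  have hCδ : 0 < Cδ := lt_of_lt_of_le hδ (le_trans (hσb 0).1 (hσb 0).2)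
  have hnorm1 : ∀ x t, ‖ξ x t‖ ≤ 1 := by
    intro x t
    refine le_trans (hξ x t) (max_le one_pos.le ?_)
    nlinarith [sq_nonneg (Metric.infDist x (Γ t))]
  have key : ∀ x t, ∀ n : EuclideanSpace ℝ (Fin N), ‖n‖ = 1 →
      c * min ((Metric.infDist x (Γ t)) ^ 2) (1 / c) ≤ 1 - ‖ξ x t‖ ∧
        1 - ‖ξ x t‖ ≤ 2 * (1 - (inner ℝ n (ξ x t) : ℝ)) := by
    intro x t n hn
    set d := Metric.infDist x (Γ t) with hdd
    have h1 := hξ x t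
    have hinner : (inner ℝ n (ξ x t) : ℝ) ≤ ‖ξ x t‖ := by
      calc (inner ℝ n (ξ x t) : ℝ) ≤ ‖n‖ * ‖ξ x t‖ := real_inner_le_norm _ _
        _ = ‖ξ x t‖ := by rw [hn, one_mul]
    constructor
    · rcases le_total (1 - c * d ^ 2) 0 with h | h
      · rw [max_eq_left h] at h1
        have hξ0 : ‖ξ x t‖ = 0 := le_antisymm h1 (norm_nonneg _)
        have hm : min (d ^ 2) (1/c) ≤ 1/c := min_le_right _ _
        rw [hξ0]
        calc c * min (d ^ 2) (1/c) ≤ c * (1/c) :=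
              mul_le_mul_of_nonneg_left hm hc.le
          _ = 1 := by field_simp
          _ ≤ 1 - 0 := by norm_num
      · rw [max_eq_right h] at h1
        have hm : min (d ^ 2) (1/c) ≤ d ^ 2 := min_le_left _ _
        have := mul_le_mul_of_nonneg_left hm hc.le
        linarith
    · have h2 := hnorm1 x t
      linarith
  refine ⟨key, ⟨2 * Cδ * max 1 c / (c * δ), by positivity, ?_⟩⟩
  intro t
  haveI := hP t
  set M := max 1 c with hM
  have hM1 : (1:ℝ) ≤ M := le_max_left _ _
  set C := 2 * Cδ * M / (c * δ) with hC
  -- pointwise a.e. inequality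
  have hae : ∀ᵐ x ∂(P t), σ x * min ((Metric.infDist x (Γ t)) ^ 2) 1 ≤
      C * (σ x * (1 - (inner ℝ (nA t x) (ξ x t) : ℝ))) := by
    filter_upwards [hnA1 t] with x hx
    obtain ⟨h1, h2⟩ := key x t (nA t x) hx
    set d := Metric.infDist x (Γ t)
    set I : ℝ := 1 - (inner ℝ (nA t x) (ξ x t) : ℝ) with hI
    have hm0 : 0 ≤ min (d ^ 2) (1/c) := le_min (sq_nonneg _) (by positivity)
    have hI0 : 0 ≤ I := by nlinarith
    have hA : min (d ^ 2) 1 ≤ M * min (d ^ 2) (1/c) := min_aux c (d ^ 2) hc (sq_nonneg _)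
    have hchain : c * min (d ^ 2) (1/c) ≤ 2 * I := by linarith
    have hσ1 := (hσb x).1
    have hσ2 := (hσb x).2
    have hmin1 : 0 ≤ min (d ^ 2) 1 := le_min (sq_nonneg _) one_pos.le
    rw [hC, div_mul_eq_mul_div, le_div_iff₀ (by positivity : (0:ℝ) < c * δ)]
    have e1 : σ x * min (d ^ 2) 1 ≤ Cδ * (M * min (d ^ 2) (1/c)) :=
      mul_le_mul hσ2 hA hmin1 hCδ.le
    calc σ x * min (d ^ 2) 1 * (c * δ)
        ≤ Cδ * (M * min (d ^ 2) (1/c)) * (c * δ) :=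
          mul_le_mul_of_nonneg_right e1 (by positivity)
      _ = Cδ * M * δ * (c * min (d ^ 2) (1/c)) := by ring
      _ ≤ Cδ * M * δ * (2 * I) := by
          refine mul_le_mul_of_nonneg_left hchain ?_
          have : (0:ℝ) ≤ M := by linarith
          positivity
      _ = 2 * Cδ * M * (δ * I) := by ring
      _ ≤ 2 * Cδ * M * (σ x * I) := by
          refine mul_le_mul_of_nonneg_left (mul_le_mul_of_nonneg_right hσ1 hI0) ?_
          have : (0:ℝ) ≤ M := by linarith
          positivity
  -- integrability of the right-hand side integrand
  have hgm : AEStronglyMeasurable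
      (fun x => σ x * (1 - (inner ℝ (nA t x) (ξ x t) : ℝ))) (P t) :=
    (hσ.measurable.mul (measurable_const.sub ((hnAm t).inner (hξm t)))).aestronglyMeasurable
  have hgi : Integrable (fun x => σ x * (1 - (inner ℝ (nA t x) (ξ x t) : ℝ))) (P t) := by
    refine Integrable.mono' (integrable_const (Cδ * 2)) hgm ?_
    filter_upwards [hnA1 t] with x hx
    have hib : |(inner ℝ (nA t x) (ξ x t) : ℝ)| ≤ 1 := by
      refine le_trans (abs_real_inner_le_norm _ _) ?_
      rw [hx, one_mul]; exact hnorm1 x t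
    have h1 : |1 - (inner ℝ (nA t x) (ξ x t) : ℝ)| ≤ 2 := by
      rw [abs_le] at hib ⊢; constructor <;> linarith [hib.1, hib.2]
    have hσ1 := (hσb x).1
    have hσ2 := (hσb x).2
    rw [Real.norm_eq_abs, abs_mul, abs_of_pos (lt_of_lt_of_le hδ hσ1)]
    exact mul_le_mul hσ2 h1 (abs_nonneg _) hCδ.le
  have hfnn : 0 ≤ᵐ[P t] fun x => σ x * min ((Metric.infDist x (Γ t)) ^ 2) 1 := by
    refine Filter.Eventually.of_forall fun x => ?_
    have hσ1 := (hσb x).1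
    exact mul_nonneg (le_trans hδ.le hσ1) (le_min (sq_nonneg _) one_pos.le)
  calc (∫ x, σ x * min ((Metric.infDist x (Γ t)) ^ 2) 1 ∂(P t))
      ≤ ∫ x, C * (σ x * (1 - (inner ℝ (nA t x) (ξ x t) : ℝ))) ∂(P t) :=
        integral_mono_of_nonneg hfnn (hgi.const_mul C) hae
    _ = C * ∫ x, σ x * (1 - (inner ℝ (nA t x) (ξ x t) : ℝ)) ∂(P t) :=
        integral_const_mul _ _
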